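/- arXiv:2605.30648 — 2 statements merged into one kernel-verified Lean document; each statement's English description precedes it below -/
import Mathlib

section
/- Let g : ℝ → ℝ be twice differentiable with g(t) ≥ 0 for all t, and suppose there exist constants H₀ ≥ 0 and H₁ > 0 such that g''(t) ≤ H₀ + H₁·g(t) for all t. Then g'(0) ≤ √(2·H₀·g(0) + H₁·g(0)²). -/
/-- If `g : ℝ → ℝ` is twice differentiable, nonnegative, and its second derivative
satisfies `g'' t ≤ H₀ + H₁ * g t` with `H₀ ≥ 0`, `H₁ > 0`, then
`g' 0 ≤ √(2 H₀ g 0 + H₁ (g 0)²)`. -/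
theorem stmt0 (g : ℝ → ℝ) (hg1 : Differentiable ℝ g) (hg2 : Differentiable ℝ (deriv g))
    (hgnn : ∀ t, 0 ≤ g t) (H0 H1 : ℝ) (hH0 : 0 ≤ H0) (hH1 : 0 < H1)
    (hode : ∀ t, deriv (deriv g) t ≤ H0 + H1 * g t) :
    deriv g 0 ≤ Real.sqrt (2 * H0 * g 0 + H1 * (g 0) ^ 2) := by
  by_contra hcon
  push_neg at hcon
  set D := 2 * H0 * g 0 + H1 * g 0 ^ 2 with hD
  have hg00 := hgnn 0
  have hDnn : 0 ≤ D := by nlinarith [mul_nonneg hH0 hg00, mul_nonneg hH1.le (sq_nonneg (g 0))]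
  have hg0' : 0 < deriv g 0 := lt_of_le_of_lt (Real.sqrt_nonneg D) hcon
  have hDlt : D < (deriv g 0) ^ 2 := by
    calc D = Real.sqrt D ^ 2 := (Real.sq_sqrt hDnn).symm
    _ < (deriv g 0) ^ 2 := by
        apply pow_lt_pow_left₀ hcon (Real.sqrt_nonneg D)
        norm_num
  set c := (deriv g 0) ^ 2 - D with hc
  have hcpos : 0 < c := by linarith
  set F := fun t => (deriv g t) ^ 2 - 2 * H0 * g t - H1 * (g t) ^ 2 with hFdef
  have hcontg' : Continuous (deriv g) := hg2.continuous
  have hFder : ∀ t, HasDerivAt F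
      (2 * deriv g t * deriv (deriv g) t - 2 * H0 * deriv g t - H1 * (2 * g t * deriv g t)) t := by
    intro t
    have hd0 : HasDerivAt g (deriv g t) t := (hg1 t).hasDerivAt
    have hd1 : HasDerivAt (deriv g) (deriv (deriv g) t) t := (hg2 t).hasDerivAt
    have A := hd1.pow 2
    have B := hd0.const_mul (2 * H0)
    have C := (hd0.pow 2).const_mul H1
    exact ((A.sub B).sub C).congr_deriv (by push_cast; ring)
  have hFdiff : Differentiable ℝ F := fun t => (hFder t).differentiableAt
  have hderF : ∀ t, 0 ≤ deriv g t → deriv F t ≤ 0 := by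
    intro t ht
    rw [(hFder t).deriv]
    have h1 : deriv g t * deriv (deriv g) t ≤ deriv g t * (H0 + H1 * g t) :=
      mul_le_mul_of_nonneg_left (hode t) ht
    nlinarith
  have hanti : ∀ a, a ≤ 0 → (∀ u ∈ Set.Icc a 0, 0 ≤ deriv g u) → F 0 ≤ F a := by
    intro a ha hpos
    have h := antitoneOn_of_deriv_nonpos (convex_Icc a 0) hFdiff.continuous.continuousOn
      (hFdiff.differentiableOn) ?_ (Set.left_mem_Icc.2 ha) (Set.right_mem_Icc.2 ha) ha
    · exact h
    · intro x hx
      rw [interior_Icc] at hx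
      exact hderF x (hpos x ⟨hx.1.le, hx.2.le⟩)
  have hF0 : F 0 = c := by simp only [hFdef, hc, hD]; ring
  by_cases hcase : ∀ t ≤ (0 : ℝ), 0 ≤ deriv g t
  · -- g' ≥ 0 on (-∞, 0]; then g' ≥ √c there, so g goes negative far to the left.
    set s := Real.sqrt c with hs
    have hspos : 0 < s := Real.sqrt_pos.2 hcpos
    have hge : ∀ t ≤ (0 : ℝ), s ≤ deriv g t := by
      intro t ht
      have h1 : F 0 ≤ F t := hanti t ht (fun u hu => hcase u hu.2)
      have h2 : c ≤ (deriv g t) ^ 2 := by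
        have hgt := hgnn t
        simp only [hFdef] at h1
        simp only [hc, hD]
        nlinarith [mul_nonneg hH0 hgt, mul_nonneg hH1.le (sq_nonneg (g t))]
      calc s ≤ Real.sqrt ((deriv g t) ^ 2) := Real.sqrt_le_sqrt h2
      _ = deriv g t := by rw [Real.sqrt_sq (hcase t ht)]
    set T := -(g 0 + 1) / s with hT
    have hTneg : T ≤ 0 := by
      apply div_nonpos_of_nonpos_of_nonneg
      · linarith
      · exact hspos.le
    have hmono : MonotoneOn (fun u => g u - s * u) (Set.Icc T 0) := by
      apply monotoneOn_of_deriv_nonneg (convex_Icc T 0)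
      · exact (hg1.continuous.sub (continuous_const.mul continuous_id)).continuousOn
      · exact (hg1.sub ((differentiable_const s).mul differentiable_id)).differentiableOn
      · intro x hx
        rw [interior_Icc] at hx
        have hdx : HasDerivAt (fun u => g u - s * u) (deriv g x - s) x := by
          exact ((hg1 x).hasDerivAt.sub ((hasDerivAt_id' x).const_mul s)).congr_deriv (by ring)
        rw [hdx.deriv]
        have := hge x hx.2.le
        linarith
    have hle : g T - s * T ≤ g 0 - s * 0 :=
      hmono (Set.left_mem_Icc.2 hTneg) (Set.right_mem_Icc.2 hTneg) hTneg
    have hsT : s * T = -(g 0 + 1) := by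
      rw [hT]
      field_simp
    have : g T ≤ -1 := by
      rw [hsT] at hle
      linarith
    linarith [hgnn T]
  · -- there is t0 ≤ 0 with g'(t0) < 0; take the last zero t1 of g' before 0.
    push_neg at hcase
    obtain ⟨t0, ht0le, ht0neg⟩ := hcase
    set Z := {t | t ∈ Set.Icc t0 (0 : ℝ) ∧ deriv g t = 0} with hZ
    have hZsub : Z ⊆ Set.Icc t0 0 := fun t ht => ht.1
    have hZc : IsClosed Z := by
      have : Z = Set.Icc t0 0 ∩ deriv g ⁻¹' {0} := by
        ext t; simp [hZ, Set.mem_inter_iff]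
      rw [this]
      exact isClosed_Icc.inter (isClosed_singleton.preimage hcontg')
    have hZne : Z.Nonempty := by
      have h0mem : (0 : ℝ) ∈ Set.Icc (deriv g t0) (deriv g 0) := ⟨ht0neg.le, hg0'.le⟩
      obtain ⟨z, hz, hz0⟩ := intermediate_value_Icc ht0le hcontg'.continuousOn h0mem
      exact ⟨z, hz, hz0⟩
    have hZcpt : IsCompact Z := isCompact_Icc.of_isClosed_subset hZc hZsub
    set t1 := sSup Z with ht1
    have ht1mem : t1 ∈ Z := hZcpt.sSup_mem hZne
    have ht1le : t1 ≤ 0 := ht1mem.1.2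
    have ht1zero : deriv g t1 = 0 := ht1mem.2
    have hpos : ∀ u ∈ Set.Icc t1 0, 0 ≤ deriv g u := by
      intro u hu
      by_contra hneg
      push_neg at hneg
      have h0mem : (0 : ℝ) ∈ Set.Icc (deriv g u) (deriv g 0) := ⟨hneg.le, hg0'.le⟩
      obtain ⟨z, hz, hz0⟩ := intermediate_value_Icc hu.2 hcontg'.continuousOn h0mem
      have hut1 : t1 < u := by
        rcases lt_or_eq_of_le hu.1 with h | h
        · exact h
        · rw [← h] at hneg; rw [ht1zero] at hneg; linarith
      have hzZ : z ∈ Z := ⟨⟨le_trans ht1mem.1.1 (le_trans hut1.le hz.1), hz.2⟩, hz0⟩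
      have : z ≤ t1 := le_csSup hZcpt.bddAbove hzZ
      linarith [hz.1]
    have h1 : F 0 ≤ F t1 := hanti t1 ht1le hpos
    have hFt1 : F t1 ≤ 0 := by
      simp only [hFdef, ht1zero]
      nlinarith [hgnn t1, mul_nonneg hH0 (hgnn t1), mul_nonneg hH1.le (sq_nonneg (g t1))]
    rw [hF0] at h1
    linarith
end

section
/- Let f : ℝᴰ → ℝ be twice differentiable and nonnegative, and suppose for all θ the (p→q) operator norm of the Hessian satisfies ‖∇²f(θ)‖_{p→q} ≤ H₀ + H₁·f(θ), where H₀, H₁ ≥ 0 and 1/p + 1/q = 1. Then for all θ, ‖∇f(θ)‖_q ≤ √(2·H₀·f(θ) + H₁·f(θ)²). -/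
open scoped BigOperators

noncomputable def lpNorm (p : ENNReal) {ι : Type*} [Fintype ι] (x : ι → ℝ) : ℝ :=
  ‖(WithLp.equiv p (ι → ℝ)).symm x‖

noncomputable def opNorm (p q : ENNReal) {ι κ : Type*} [Fintype ι] [Fintype κ]
    (A : Matrix ι κ ℝ) : ℝ :=
  sSup {c | ∃ x : κ → ℝ, lpNorm p x ≤ 1 ∧ c = lpNorm q (A.mulVec x)}

noncomputable def dotCLM {n : ℕ} (v : Fin n → ℝ) : (Fin n → ℝ) →L[ℝ] ℝ :=
  LinearMap.toContinuousLinearMap (∑ i, v i • (LinearMap.proj i : (Fin n → ℝ) →ₗ[ℝ] ℝ))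

noncomputable def mulVecCLM {m n : ℕ} (M : Matrix (Fin m) (Fin n) ℝ) :
    (Fin n → ℝ) →L[ℝ] (Fin m → ℝ) :=
  LinearMap.toContinuousLinearMap M.mulVecLin

section helpers
variable {ι κ : Type*} [Fintype ι] [Fintype κ]

lemma lpNorm_eq_sum' {p : ENNReal} (hp0 : p ≠ 0) (hpt : p ≠ ⊤) (x : ι → ℝ) :
    lpNorm p x = (∑ i, |x i| ^ p.toReal) ^ (1 / p.toReal) := by
  have h : 0 < p.toReal := ENNReal.toReal_pos hp0 hpt
  rw [lpNorm, PiLp.norm_eq_sum h]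
  simp [Real.norm_eq_abs]

lemma lpNorm_top' (x : ι → ℝ) : lpNorm ⊤ x = ⨆ i, |x i| := by
  rw [lpNorm, PiLp.norm_eq_ciSup]
  simp [Real.norm_eq_abs]

lemma lpNorm_one' (x : ι → ℝ) : lpNorm 1 x = ∑ i, |x i| := by
  rw [lpNorm_eq_sum' one_ne_zero ENNReal.one_ne_top]
  simp

lemma lpNorm_nonneg' {p : ENNReal} (hp : 1 ≤ p) (x : ι → ℝ) : 0 ≤ lpNorm p x := by
  haveI : Fact (1 ≤ p) := ⟨hp⟩
  exact norm_nonneg _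

lemma conj_trichotomy {p q : ENNReal} (h : p.HolderConjugate q) :
    (p = 1 ∧ q = ⊤) ∨ (p = ⊤ ∧ q = 1) ∨
      (p ≠ ⊤ ∧ q ≠ ⊤ ∧ p.toReal.HolderConjugate q.toReal) := by
  have hinv := ENNReal.HolderConjugate.inv_add_inv_eq_one p q
  by_cases hp1 : p = 1
  · left
    refine ⟨hp1, ?_⟩
    rw [hp1] at hinv
    simp only [inv_one] at hinv
    have hq0 : q⁻¹ = 0 := by
      have : (1 : ENNReal) + q⁻¹ = 1 + 0 := by simpa using hinv
      exact (ENNReal.add_right_inj ENNReal.one_ne_top).mp this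
    exact ENNReal.inv_eq_zero.mp hq0
  by_cases hpt : p = ⊤
  · right; left
    refine ⟨hpt, ?_⟩
    rw [hpt] at hinv
    simp only [ENNReal.inv_top, zero_add] at hinv
    exact ENNReal.inv_eq_one.mp hinv
  · right; right
    have hqt : q ≠ ⊤ := by
      rintro rfl
      simp only [ENNReal.inv_top, add_zero] at hinv
      exact hp1 (ENNReal.inv_eq_one.mp hinv)
    refine ⟨hpt, hqt, Real.holderConjugate_iff.mpr ⟨?_, ?_⟩⟩
    · have h1p : 1 < p := lt_of_le_of_ne (ENNReal.HolderConjugate.one_le p q) (Ne.symm hp1)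
      have := (ENNReal.toReal_lt_toReal ENNReal.one_ne_top hpt).mpr h1p
      simpa using this
    · have hfin1 : p⁻¹ ≠ ⊤ := ENNReal.inv_ne_top.mpr (ENNReal.HolderConjugate.ne_zero p q)
      have hfin2 : q⁻¹ ≠ ⊤ := ENNReal.inv_ne_top.mpr (ENNReal.HolderConjugate.ne_zero q p)
      have := congrArg ENNReal.toReal hinv
      rw [ENNReal.toReal_add hfin1 hfin2, ENNReal.toReal_inv, ENNReal.toReal_inv] at this
      simpa using this

lemma holder' {p q : ENNReal} (h : p.HolderConjugate q) (v u : ι → ℝ) :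
    ∑ i, v i * u i ≤ lpNorm q v * lpNorm p u := by
  rcases conj_trichotomy h with ⟨hp, hq⟩ | ⟨hp, hq⟩ | ⟨hp, hq, hc⟩
  · -- p = 1, q = ⊤
    subst hp; subst hq
    rw [lpNorm_top', lpNorm_one']
    calc ∑ i, v i * u i ≤ ∑ i, |v i| * |u i| := by
          refine Finset.sum_le_sum fun i _ => ?_
          rw [← abs_mul]; exact le_abs_self _
      _ ≤ ∑ i, (⨆ j, |v j|) * |u i| := by
          refine Finset.sum_le_sum fun i _ => ?_
          exact mul_le_mul_of_nonneg_right (le_ciSup (f := fun j => |v j|) (Set.Finite.bddAbove (Set.finite_range _)) i) (abs_nonneg _)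
      _ = (⨆ j, |v j|) * ∑ i, |u i| := by rw [Finset.mul_sum]
  · -- p = ⊤, q = 1
    subst hp; subst hq
    rw [lpNorm_top', lpNorm_one']
    calc ∑ i, v i * u i ≤ ∑ i, |v i| * |u i| := by
          refine Finset.sum_le_sum fun i _ => ?_
          rw [← abs_mul]; exact le_abs_self _
      _ ≤ ∑ i, |v i| * (⨆ j, |u j|) := by
          refine Finset.sum_le_sum fun i _ => ?_
          exact mul_le_mul_of_nonneg_left (le_ciSup (f := fun j => |u j|) (Set.Finite.bddAbove (Set.finite_range _)) i) (abs_nonneg _)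
      _ = (∑ i, |v i|) * (⨆ j, |u j|) := by rw [← Finset.sum_mul]
  · rw [lpNorm_eq_sum' (ENNReal.HolderConjugate.ne_zero p q) hp, lpNorm_eq_sum' (ENNReal.HolderConjugate.ne_zero q p) hq]
    exact Real.inner_le_Lp_mul_Lq Finset.univ v u hc.symm

lemma abs_le_lpNorm' {p : ENNReal} (hp : 1 ≤ p) (x : ι → ℝ) (j : ι) : |x j| ≤ lpNorm p x := by
  by_cases hpt : p = ⊤
  · subst hpt
    rw [lpNorm_top']
    exact le_ciSup (f := fun i => |x i|) (Set.Finite.bddAbove (Set.finite_range _)) j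
  · have hp0 : p ≠ 0 := by positivity
    have hptr : 0 < p.toReal := ENNReal.toReal_pos hp0 hpt
    rw [lpNorm_eq_sum' hp0 hpt]
    have h1 : |x j| ^ p.toReal ≤ ∑ i, |x i| ^ p.toReal :=
      Finset.single_le_sum (fun i _ => Real.rpow_nonneg (abs_nonneg _) _) (Finset.mem_univ j)
    calc |x j| = (|x j| ^ p.toReal) ^ (1 / p.toReal) := by
          rw [← Real.rpow_mul (abs_nonneg _), mul_one_div, div_self hptr.ne', Real.rpow_one]
      _ ≤ (∑ i, |x i| ^ p.toReal) ^ (1 / p.toReal) :=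
          Real.rpow_le_rpow (Real.rpow_nonneg (abs_nonneg _) _) h1 (by positivity)

lemma lpNorm_le_sum_abs' {q : ENNReal} (hq : 1 ≤ q) (y : ι → ℝ) :
    lpNorm q y ≤ ∑ i, |y i| := by
  by_cases hqt : q = ⊤
  · subst hqt
    rw [lpNorm_top']
    exact Real.iSup_le (fun i => Finset.single_le_sum (f := fun i => |y i|) (fun i _ => abs_nonneg _) (Finset.mem_univ i))
      (Finset.sum_nonneg fun i _ => abs_nonneg _)
  · have hq0 : q ≠ 0 := by positivity
    have hqtr : 0 < q.toReal := ENNReal.toReal_pos hq0 hqt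
    rw [lpNorm_eq_sum' hq0 hqt]
    have hq1 : 1 ≤ q.toReal := by
      rw [← ENNReal.toReal_one]; exact ENNReal.toReal_mono hqt hq
    set T := ∑ i, |y i| with hT
    have hT0 : 0 ≤ T := Finset.sum_nonneg fun i _ => abs_nonneg _
    have key : ∑ i, |y i| ^ q.toReal ≤ T ^ q.toReal := by
      have h2 : ∀ i, |y i| ^ q.toReal ≤ |y i| * T ^ (q.toReal - 1) := by
        intro i
        have hyT : |y i| ≤ T := Finset.single_le_sum (f := fun i => |y i|) (fun i _ => abs_nonneg _) (Finset.mem_univ i)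
        calc |y i| ^ q.toReal = |y i| ^ (1 + (q.toReal - 1)) := by ring_nf
          _ = |y i| ^ (1:ℝ) * |y i| ^ (q.toReal - 1) := by
              rw [Real.rpow_add' (abs_nonneg _) (by intro h; apply hqtr.ne'; linarith)]
          _ ≤ |y i| * T ^ (q.toReal - 1) := by
              rw [Real.rpow_one]
              exact mul_le_mul_of_nonneg_left
                (Real.rpow_le_rpow (abs_nonneg _) hyT (by linarith)) (abs_nonneg _)
      calc ∑ i, |y i| ^ q.toReal ≤ ∑ i, |y i| * T ^ (q.toReal - 1) := Finset.sum_le_sum fun i _ => h2 i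
        _ = T * T ^ (q.toReal - 1) := by rw [← Finset.sum_mul]
        _ = T ^ (1:ℝ) * T ^ (q.toReal - 1) := by rw [Real.rpow_one]
        _ = T ^ q.toReal := by rw [← Real.rpow_add' hT0 (by intro h; apply hqtr.ne'; linarith)]; ring_nf
    calc (∑ i, |y i| ^ q.toReal) ^ (1 / q.toReal) ≤ (T ^ q.toReal) ^ (1 / q.toReal) :=
          Real.rpow_le_rpow (Finset.sum_nonneg fun i _ => Real.rpow_nonneg (abs_nonneg _) _) key (by positivity)
      _ = T := by
          rw [← Real.rpow_mul hT0, mul_one_div, div_self hqtr.ne', Real.rpow_one]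

lemma mul_sign_eq_abs (x : ℝ) : x * Real.sign x = |x| := by
  rcases lt_trichotomy x 0 with h | h | h
  · rw [Real.sign_of_neg h, abs_of_neg h]; ring
  · simp [h]
  · rw [Real.sign_of_pos h, abs_of_pos h]; ring

lemma lpNorm_zero' {p : ENNReal} (hp : 1 ≤ p) : lpNorm p (0 : ι → ℝ) = 0 := by
  haveI : Fact (1 ≤ p) := ⟨hp⟩
  have : (WithLp.equiv p (ι → ℝ)).symm 0 = 0 := rfl
  rw [lpNorm, this, norm_zero]

lemma dual_exists' {p q : ENNReal} (h : p.HolderConjugate q) (v : ι → ℝ) :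
    ∃ u : ι → ℝ, lpNorm p u ≤ 1 ∧ ∑ i, v i * u i = lpNorm q v := by
  classical
  by_cases hv : v = 0
  · refine ⟨0, ?_, ?_⟩
    · rw [lpNorm_zero' (ENNReal.HolderConjugate.one_le p q)]; norm_num
    · subst hv; rw [lpNorm_zero' (ENNReal.HolderConjugate.one_le q p)]; simp
  obtain ⟨i₁, hi₁⟩ : ∃ i, v i ≠ 0 := Function.ne_iff.mp hv
  haveI : Nonempty ι := ⟨i₁⟩
  rcases conj_trichotomy h with ⟨hp, hq⟩ | ⟨hp, hq⟩ | ⟨hp, hq, hc⟩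
  · -- p = 1, q = ⊤
    subst hp; subst hq
    obtain ⟨i₀, -, hmax⟩ := Finset.exists_max_image Finset.univ (fun i => |v i|) ⟨i₁, Finset.mem_univ i₁⟩
    have hvi₀ : 0 < |v i₀| := lt_of_lt_of_le (abs_pos.mpr hi₁) (hmax i₁ (Finset.mem_univ i₁))
    have hvi₀' : v i₀ ≠ 0 := by intro h0; rw [h0] at hvi₀; simp at hvi₀
    refine ⟨fun j => if j = i₀ then Real.sign (v i₀) else 0, ?_, ?_⟩
    · rw [lpNorm_one']
      have habs : ∀ j, |if j = i₀ then Real.sign (v i₀) else 0| = if j = i₀ then 1 else 0 := by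
        intro j
        by_cases hj : j = i₀
        · simp only [if_pos hj]
          rcases lt_trichotomy (v i₀) 0 with h' | h' | h'
          · rw [Real.sign_of_neg h']; norm_num
          · exact absurd h' hvi₀'
          · rw [Real.sign_of_pos h']; norm_num
        · simp [hj]
      simp only [habs]
      simp
    · rw [lpNorm_top']
      have hs : ∑ i, v i * (if i = i₀ then Real.sign (v i₀) else 0) = |v i₀| := by
        rw [Finset.sum_eq_single i₀]
        · simp [mul_sign_eq_abs]
        · intro b _ hb; simp [hb]
        · simp
      rw [hs]
      refine le_antisymm ?_ ?_
      · exact le_ciSup (f := fun i => |v i|) (Set.Finite.bddAbove (Set.finite_range _)) i₀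
      · exact ciSup_le fun i => hmax i (Finset.mem_univ i)
  · -- p = ⊤, q = 1
    subst hp; subst hq
    refine ⟨fun j => Real.sign (v j), ?_, ?_⟩
    · rw [lpNorm_top']
      refine Real.iSup_le (fun i => ?_) zero_le_one
      rcases lt_trichotomy (v i) 0 with h' | h' | h'
      · rw [Real.sign_of_neg h']; norm_num
      · rw [h']; simp
      · rw [Real.sign_of_pos h']; norm_num
    · rw [lpNorm_one']
      exact Finset.sum_congr rfl fun i _ => mul_sign_eq_abs (v i)
  · -- both finite
    set q' := q.toReal with hq'
    set p' := p.toReal with hp'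
    have hq'1 : 1 < q' := hc.symm.lt
    have hp'1 : 1 < p' := hc.lt
    have hsub : q' - 1 ≠ 0 := by intro hh; linarith
    set S := ∑ i, |v i| ^ q' with hS
    have hSpos : 0 < S := by
      have : 0 < |v i₁| ^ q' := Real.rpow_pos_of_pos (abs_pos.mpr hi₁) _
      exact lt_of_lt_of_le this (Finset.single_le_sum (f := fun i => |v i| ^ q')
        (fun i _ => Real.rpow_nonneg (abs_nonneg _) _) (Finset.mem_univ i₁))
    set N := lpNorm q v with hN
    have hNeq : N = S ^ (1 / q') := by rw [hN, lpNorm_eq_sum' (ENNReal.HolderConjugate.ne_zero q p) hq]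
    have hNpos : 0 < N := by rw [hNeq]; positivity
    have hNq : N ^ q' = S := by
      rw [hNeq, ← Real.rpow_mul hSpos.le, one_div_mul_cancel (by linarith), Real.rpow_one]
    have hqp : (q' - 1) * p' = q' := hc.symm.sub_one_mul_conj
    refine ⟨fun j => |v j| ^ (q' - 1) / N ^ (q' - 1) * Real.sign (v j), ?_, ?_⟩
    · have habs : ∀ j, |(|v j| ^ (q' - 1) / N ^ (q' - 1) * Real.sign (v j))|
          = |v j| ^ (q' - 1) / N ^ (q' - 1) := by
        intro j
        rw [abs_mul, abs_of_nonneg (by positivity)]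
        by_cases hj : v j = 0
        · rw [hj]; simp [Real.zero_rpow hsub]
        · rcases lt_trichotomy (v j) 0 with h' | h' | h'
          · rw [Real.sign_of_neg h']; norm_num
          · exact absurd h' hj
          · rw [Real.sign_of_pos h']; norm_num
      have hterm : ∀ j, |(|v j| ^ (q' - 1) / N ^ (q' - 1) * Real.sign (v j))| ^ p'
          = |v j| ^ q' / N ^ q' := by
        intro j
        rw [habs j, Real.div_rpow (by positivity) (by positivity),
          ← Real.rpow_mul (abs_nonneg _), ← Real.rpow_mul hNpos.le, hqp]
      have hsum : ∑ j, |(|v j| ^ (q' - 1) / N ^ (q' - 1) * Real.sign (v j))| ^ p' = 1 := by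
        simp only [hterm]
        rw [← Finset.sum_div, ← hS, hNq, div_self hSpos.ne']
      rw [lpNorm_eq_sum' (ENNReal.HolderConjugate.ne_zero p q) hp, ← hp', hsum, Real.one_rpow]
    · have hterm2 : ∀ j, v j * (|v j| ^ (q' - 1) / N ^ (q' - 1) * Real.sign (v j))
          = |v j| ^ q' / N ^ (q' - 1) := by
        intro j
        have hr : v j * (|v j| ^ (q' - 1) / N ^ (q' - 1) * Real.sign (v j))
            = (v j * Real.sign (v j)) * |v j| ^ (q' - 1) / N ^ (q' - 1) := by ring
        rw [hr, mul_sign_eq_abs]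
        congr 1
        have he : q' = (1:ℝ) + (q' - 1) := by ring
        calc |v j| * |v j| ^ (q' - 1) = |v j| ^ (1:ℝ) * |v j| ^ (q' - 1) := by rw [Real.rpow_one]
          _ = |v j| ^ ((1:ℝ) + (q' - 1)) := by
              rw [← Real.rpow_add' (abs_nonneg _) (by rw [← he]; intro hh; linarith)]
          _ = |v j| ^ q' := by rw [← he]
      simp only [hterm2]
      rw [← Finset.sum_div, ← hS]
      rw [div_eq_iff (by positivity : N ^ (q' - 1) ≠ 0)]
      calc S = N ^ q' := hNq.symm
        _ = N ^ ((q' - 1) + 1) := by ring_nf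
        _ = N ^ (q' - 1) * N ^ (1:ℝ) := Real.rpow_add hNpos _ _
        _ = N * N ^ (q' - 1) := by rw [Real.rpow_one]; ring

lemma le_opNorm' {p q : ENNReal} (hp : 1 ≤ p) (hq : 1 ≤ q) (A : Matrix ι κ ℝ)
    {x : κ → ℝ} (hx : lpNorm p x ≤ 1) : lpNorm q (A.mulVec x) ≤ opNorm p q A := by
  have hmem : lpNorm q (A.mulVec x) ∈
      {c | ∃ z : κ → ℝ, lpNorm p z ≤ 1 ∧ c = lpNorm q (A.mulVec z)} := ⟨x, hx, rfl⟩
  refine le_csSup ⟨∑ i, ∑ j, |A i j|, ?_⟩ hmem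
  rintro c ⟨y, hy, rfl⟩
  calc lpNorm q (A.mulVec y) ≤ ∑ i, |A.mulVec y i| := lpNorm_le_sum_abs' hq _
    _ ≤ ∑ i, ∑ j, |A i j| := by
        refine Finset.sum_le_sum fun i _ => ?_
        calc |A.mulVec y i| = |∑ j, A i j * y j| := by rw [Matrix.mulVec, dotProduct]
          _ ≤ ∑ j, |A i j * y j| := Finset.abs_sum_le_sum_abs _ _
          _ ≤ ∑ j, |A i j| := by
              refine Finset.sum_le_sum fun j _ => ?_
              rw [abs_mul]
              calc |A i j| * |y j| ≤ |A i j| * 1 := by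
                    refine mul_le_mul_of_nonneg_left ?_ (abs_nonneg _)
                    exact le_trans (abs_le_lpNorm' hp y j) hy
                _ = |A i j| := mul_one _

lemma dotCLM_apply {n : ℕ} (v w : Fin n → ℝ) : dotCLM v w = ∑ i, v i * w i := by
  simp [dotCLM]

lemma mulVecCLM_apply {m n : ℕ} (M : Matrix (Fin m) (Fin n) ℝ) (w : Fin n → ℝ) :
    mulVecCLM M w = M.mulVec w := by
  simp [mulVecCLM]

end helpers

theorem stmt1 {D : ℕ} (p q : ENNReal) (hp : 1 ≤ p) (hq : 1 ≤ q) (hpq : 1/p + 1/q = 1)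
    (f : (Fin D → ℝ) → ℝ) (g : (Fin D → ℝ) → (Fin D → ℝ))
    (Hess : (Fin D → ℝ) → Matrix (Fin D) (Fin D) ℝ)
    (hfnn : ∀ θ, 0 ≤ f θ)
    (hgrad : ∀ θ, HasFDerivAt f (dotCLM (g θ)) θ)
    (hhess : ∀ θ, HasFDerivAt g (mulVecCLM (Hess θ)) θ)
    (H0 H1 : ℝ) (hH0 : 0 ≤ H0) (hH1 : 0 ≤ H1)
    (hnus : ∀ θ, opNorm p q (Hess θ) ≤ H0 + H1 * f θ) :
    ∀ θ, lpNorm q (g θ) ≤ Real.sqrt (2 * H0 * f θ + H1 * (f θ) ^ 2) := by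
  have hconj : p.HolderConjugate q := ⟨by simpa [one_div] using hpq⟩
  intro θ₀
  obtain ⟨u, hu, hvu⟩ := dual_exists' hconj (g θ₀)
  rw [← hvu]
  by_contra hcon
  push_neg at hcon
  set A := f θ₀ with hAdef
  have hA0 : 0 ≤ A := hfnn θ₀
  set R := 2 * H0 * A + H1 * A ^ 2 with hRdef
  have hR0 : 0 ≤ R := by positivity
  -- the line and functions along it
  set c : ℝ → (Fin D → ℝ) := fun t => θ₀ + t • u with hcdef
  set P : ℝ → ℝ := fun t => ∑ i, g (c t) i * u i with hPdef
  set Q : ℝ → ℝ := fun t => ∑ i, (Hess (c t)).mulVec u i * u i with hQdef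
  set φ : ℝ → ℝ := fun t => f (c t) with hφdef
  set E : ℝ → ℝ := fun t => P t ^ 2 - 2 * H0 * φ t - H1 * φ t ^ 2 with hEdef
  have hc0 : c 0 = θ₀ := by simp [hcdef]
  have hφnn : ∀ t, 0 ≤ φ t := fun t => hfnn (c t)
  have hφ0 : φ 0 = A := by rw [hφdef]; simp only []; rw [hc0]
  have hcD : ∀ t, HasDerivAt c u t := by
    intro t
    have h1 := ((hasDerivAt_id t).smul_const u).const_add θ₀
    simpa [hcdef] using h1
  have hφD : ∀ t, HasDerivAt φ (P t) t := by
    intro t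
    have h1 := (hgrad (c t)).comp_hasDerivAt t (hcD t)
    have h2 : dotCLM (g (c t)) u = P t := by rw [dotCLM_apply, hPdef]
    rw [h2] at h1
    exact h1
  have hPD : ∀ t, HasDerivAt P (Q t) t := by
    intro t
    have h2 := (hhess (c t)).comp_hasDerivAt t (hcD t)
    have h3 := (dotCLM u).hasFDerivAt.comp_hasDerivAt t h2
    have hfun : (fun s => dotCLM u (g (c s))) = P := by
      funext s
      rw [dotCLM_apply, hPdef]
      exact Finset.sum_congr rfl fun i _ => mul_comm _ _
    have hval : dotCLM u (mulVecCLM (Hess (c t)) u) = Q t := by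
      rw [dotCLM_apply, mulVecCLM_apply, hQdef]
      exact Finset.sum_congr rfl fun i _ => mul_comm _ _
    rw [← hfun, ← hval]
    exact h3
  have hQle : ∀ t, Q t ≤ H0 + H1 * φ t := by
    intro t
    have h1 : Q t ≤ lpNorm q ((Hess (c t)).mulVec u) * lpNorm p u := holder' hconj _ u
    have h2 : lpNorm q ((Hess (c t)).mulVec u) * lpNorm p u
        ≤ lpNorm q ((Hess (c t)).mulVec u) * 1 :=
      mul_le_mul_of_nonneg_left hu (lpNorm_nonneg' hq _)
    have h3 : lpNorm q ((Hess (c t)).mulVec u) ≤ opNorm p q (Hess (c t)) :=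
      le_opNorm' hp hq _ hu
    have h4 := hnus (c t)
    have h5 : H0 + H1 * f (c t) = H0 + H1 * φ t := by rw [hφdef]
    linarith
  have hED : ∀ t, HasDerivAt E (2 * P t * (Q t - H0 - H1 * φ t)) t := by
    intro t
    have h1 := (hPD t).pow 2
    have h2 := (hφD t).const_mul (2 * H0)
    have h3 := ((hφD t).pow 2).const_mul H1
    have h4 := (h1.sub h2).sub h3
    have : HasDerivAt E (2 * P t ^ (2 - 1) * Q t - 2 * H0 * P t - H1 * (2 * φ t ^ (2 - 1) * P t)) t := by
      rw [hEdef]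
      exact h4.congr_deriv (by norm_num)
    convert this using 1
    simp
    ring
  -- basic numbers
  have hP0 : √R < P 0 := by rw [hPdef]; simp only []; rw [hc0]; exact hcon
  have hB : 0 < P 0 := lt_of_le_of_lt (Real.sqrt_nonneg R) hP0
  set ε := P 0 ^ 2 - R with hεdef
  have hεpos : 0 < ε := by
    have h1 : Real.sqrt R ^ 2 < P 0 ^ 2 := by
      apply pow_lt_pow_left₀ hP0 (Real.sqrt_nonneg R) two_ne_zero
    rw [Real.sq_sqrt hR0] at h1
    simp only [hεdef]
    linarith
  have hsε : 0 < Real.sqrt ε := Real.sqrt_pos.mpr hεpos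
  have hE0 : E 0 = ε := by rw [hEdef]; simp only []; rw [hφ0, hεdef, hRdef]; ring
  -- Step A
  have stepA : ∀ t ≤ (0:ℝ), (∀ s ∈ Set.Icc t 0, 0 ≤ P s) →
      ∀ s ∈ Set.Icc t 0, Real.sqrt ε ≤ P s := by
    intro t ht hPnn
    have hanti : AntitoneOn E (Set.Icc t 0) := by
      apply antitoneOn_of_deriv_nonpos (convex_Icc t 0)
      · exact (continuous_iff_continuousAt.mpr fun s => (hED s).continuousAt).continuousOn
      · intro s hs
        exact (hED s).differentiableAt.differentiableWithinAt
      · intro s hs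
        rw [interior_Icc] at hs
        rw [(hED s).deriv]
        apply mul_nonpos_of_nonneg_of_nonpos
        · have := hPnn s ⟨hs.1.le, hs.2.le⟩; linarith
        · have := hQle s; linarith
    intro s hs
    have hEs : ε ≤ E s := by
      have h1 : E 0 ≤ E s := hanti hs ⟨ht, le_refl 0⟩ hs.2
      rw [hE0] at h1
      exact h1
    have hPs2 : ε ≤ P s ^ 2 := by
      have hφs := hφnn s
      have hE' : E s = P s ^ 2 - 2 * H0 * φ s - H1 * φ s ^ 2 := by rw [hEdef]
      nlinarith [sq_nonneg (φ s)]
    calc Real.sqrt ε ≤ Real.sqrt (P s ^ 2) := Real.sqrt_le_sqrt hPs2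
      _ = |P s| := Real.sqrt_sq_eq_abs _
      _ = P s := abs_of_nonneg (hPnn s hs)
  -- the interval endpoint
  set T := -((A + 1) / Real.sqrt ε) with hTdef
  have hT0 : T < 0 := by
    have : 0 < (A + 1) / Real.sqrt ε := by positivity
    rw [hTdef]; linarith
  set S : Set ℝ := {t : ℝ | t ∈ Set.Icc T 0 ∧ ∀ s ∈ Set.Icc t 0, 0 ≤ P s} with hSdef
  have h0S : (0:ℝ) ∈ S := by
    refine ⟨⟨hT0.le, le_refl 0⟩, fun s hs => ?_⟩
    have : s = 0 := le_antisymm hs.2 hs.1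
    rw [this]; exact hB.le
  have hSbdd : BddBelow S := ⟨T, fun t ht => ht.1.1⟩
  have hSne : S.Nonempty := ⟨0, h0S⟩
  set t₀ := sInf S with ht₀def
  have ht₀T : T ≤ t₀ := le_csInf hSne fun t ht => ht.1.1
  have ht₀0 : t₀ ≤ 0 := csInf_le hSbdd h0S
  have hmid : ∀ s, t₀ < s → s ≤ 0 → 0 ≤ P s := by
    intro s hls hs0
    obtain ⟨a, haS, has⟩ := (csInf_lt_iff hSbdd hSne).mp hls
    exact haS.2 s ⟨has.le, hs0⟩
  have hPt₀ : 0 ≤ P t₀ := by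
    rcases eq_or_lt_of_le ht₀0 with heq | hlt
    · rw [heq]; exact hB.le
    · have htend : Filter.Tendsto P (nhdsWithin t₀ (Set.Ioi t₀)) (nhds (P t₀)) :=
        (hPD t₀).continuousAt.continuousWithinAt
      refine ge_of_tendsto htend ?_
      filter_upwards [Ioc_mem_nhdsGT_of_mem ⟨le_refl t₀, hlt⟩] with s hs
      exact hmid s hs.1 hs.2
  have ht₀S : t₀ ∈ S := by
    refine ⟨⟨ht₀T, ht₀0⟩, fun s hs => ?_⟩
    rcases eq_or_lt_of_le hs.1 with heq | hlt
    · rw [← heq]; exact hPt₀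
    · exact hmid s hlt hs.2
  have ht₀eqT : t₀ = T := by
    by_contra hne
    have hTlt : T < t₀ := lt_of_le_of_ne ht₀T (Ne.symm hne)
    have hPt₀' : Real.sqrt ε ≤ P t₀ := stepA t₀ ht₀0 ht₀S.2 t₀ ⟨le_refl _, ht₀0⟩
    have hpos : 0 < P t₀ := lt_of_lt_of_le hsε hPt₀'
    have hev : ∀ᶠ s in nhds t₀, P s ∈ Set.Ioi 0 :=
      (hPD t₀).continuousAt.preimage_mem_nhds (Ioi_mem_nhds hpos)
    obtain ⟨δ, hδ, hball⟩ := Metric.eventually_nhds_iff.mp hev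
    set t₁ := max (t₀ - δ / 2) T with ht₁def
    have ht₁lt : t₁ < t₀ := max_lt (by linarith) hTlt
    have ht₁S : t₁ ∈ S := by
      refine ⟨⟨le_max_right _ _, le_trans ht₁lt.le ht₀0⟩, ?_⟩
      intro s hs
      rcases le_or_gt t₀ s with hc1 | hc1
      · exact ht₀S.2 s ⟨hc1, hs.2⟩
      · have hdist : dist s t₀ < δ := by
          rw [Real.dist_eq, abs_of_nonpos (by linarith)]
          have h1 : t₀ - δ / 2 ≤ t₁ := le_max_left _ _
          have h2 : t₁ ≤ s := hs.1
          linarith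
        exact (hball hdist).le
    have := csInf_le hSbdd ht₁S
    rw [← ht₀def] at this
    linarith
  have hTS : T ∈ S := ht₀eqT ▸ ht₀S
  have hfinal : ∀ s ∈ Set.Icc T 0, Real.sqrt ε ≤ P s := stepA T hT0.le hTS.2
  -- monotone comparison to force φ T < 0
  have hMD : ∀ t, HasDerivAt (fun s => φ s - Real.sqrt ε * s) (P t - Real.sqrt ε) t := by
    intro t
    have h1 := (hasDerivAt_id t).const_mul (Real.sqrt ε)
    have h2 := (hφD t).sub h1
    exact h2.congr_deriv (by simp)
  have hmono : MonotoneOn (fun s => φ s - Real.sqrt ε * s) (Set.Icc T 0) := by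
    apply monotoneOn_of_deriv_nonneg (convex_Icc T 0)
    · exact (continuous_iff_continuousAt.mpr fun s => (hMD s).continuousAt).continuousOn
    · intro s hs
      exact (hMD s).differentiableAt.differentiableWithinAt
    · intro s hs
      rw [interior_Icc] at hs
      rw [(hMD s).deriv]
      have := hfinal s ⟨hs.1.le, hs.2.le⟩
      linarith
  have hcomp := hmono ⟨le_refl T, hT0.le⟩ ⟨hT0.le, le_refl 0⟩ hT0.le
  simp only [] at hcomp
  have hεT : Real.sqrt ε * T = -(A + 1) := by
    rw [hTdef]
    field_simp
  have hφT := hφnn T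
  rw [hφ0] at hcomp
  -- hcomp : φ T - √ε * T ≤ A - √ε * 0
  rw [hεT] at hcomp
  simp at hcomp
  linarith
end
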